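/- Let f : ℝⁿ → ℝⁿ be C¹ and suppose μ(J(x)) ≤ −c < 0 for all x, where μ is the matrix measure of some norm. Then any two solutions x(·), ξ(·) of ẋ = f(x) satisfy |x(t) − ξ(t)| ≤ |x(0) − ξ(0)| e^{−ct} for all t ≥ 0. -/

import Mathlib

open Matrix Filter Set Topology

/-- `N` is a norm on `ℝⁿ`. -/
def IsNorm {n : ℕ} (N : (Fin n → ℝ) → ℝ) : Prop :=
  (∀ v, N v = 0 ↔ v = 0) ∧
  (∀ (c : ℝ) v, N (c • v) = |c| * N v) ∧
  (∀ u v, N (u + v) ≤ N u + N v)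

/-- Operator (induced matrix) norm of `A` with respect to the vector norm `N`. -/
noncomputable def opNorm {n : ℕ} (N : (Fin n → ℝ) → ℝ)
    (A : Matrix (Fin n) (Fin n) ℝ) : ℝ :=
  sSup ((fun v => N (A.mulVec v)) '' {v | N v ≤ 1})

/-- Matrix measure (logarithmic norm): `μ(A) = lim_{h→0⁺} (‖I + hA‖ − 1)/h`. -/
noncomputable def matMeasure {n : ℕ} (N : (Fin n → ℝ) → ℝ)
    (A : Matrix (Fin n) (Fin n) ℝ) : ℝ :=
  limUnder (𝓝[>] (0:ℝ)) (fun h => (opNorm N (1 + h • A) - 1) / h)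

/-- The Jacobian matrix of `f` at `x`. -/
noncomputable def jac {n : ℕ} (f : (Fin n → ℝ) → (Fin n → ℝ)) (x : Fin n → ℝ) :
    Matrix (Fin n) (Fin n) ℝ :=
  LinearMap.toMatrix' (fderiv ℝ f x).toLinearMap

/-- Upper right Dini derivative. -/
noncomputable def diniUpper (φ : ℝ → ℝ) (t : ℝ) : ℝ :=
  limsup (fun h => (φ (t + h) - φ t) / h) (𝓝[>] (0:ℝ))

namespace IsNormAux

variable {n : ℕ} {N : (Fin n → ℝ) → ℝ}

lemma map_zero (hN : IsNorm N) : N 0 = 0 := (hN.1 0).2 rfl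

lemma map_neg (hN : IsNorm N) (v) : N (-v) = N v := by
  have := hN.2.1 (-1) v
  simpa using this

lemma nonneg (hN : IsNorm N) (v) : 0 ≤ N v := by
  have h := hN.2.2 v (-v)
  rw [add_neg_cancel, map_zero hN, map_neg hN] at h
  linarith

lemma abs_sub_le (hN : IsNorm N) (u v) : |N u - N v| ≤ N (u - v) := by
  have h1 : N u ≤ N (u - v) + N v := by
    have := hN.2.2 (u - v) v; simpa using this
  have h2 : N v ≤ N (u - v) + N u := by
    have := hN.2.2 (v - u) u
    rw [sub_add_cancel] at this
    have e : N (v - u) = N (u - v) := by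
      rw [← map_neg hN (u - v), neg_sub]
    linarith [e ▸ this]
  rw [abs_sub_le_iff]; constructor <;> linarith

lemma sum_le (hN : IsNorm N) {ι : Type*} (s : Finset ι) (f : ι → (Fin n → ℝ)) :
    N (∑ i ∈ s, f i) ≤ ∑ i ∈ s, N (f i) := by
  classical
  induction s using Finset.induction with
  | empty => simp [map_zero hN]
  | insert _ _ h ih =>
    rename_i a s
    rw [Finset.sum_insert h, Finset.sum_insert h]
    exact le_trans (hN.2.2 _ _) (by linarith)

lemma exists_upper (hN : IsNorm N) : ∃ C > 0, ∀ v, N v ≤ C * ‖v‖ := by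
  classical
  set e : Fin n → (Fin n → ℝ) := fun i j => if i = j then 1 else 0 with he
  set C : ℝ := (∑ i : Fin n, N (e i)) + 1 with hC
  refine ⟨C, ?_, ?_⟩
  · have : 0 ≤ ∑ i : Fin n, N (e i) :=
      Finset.sum_nonneg fun i _ => nonneg hN _
    linarith
  · intro v
    have hv : v = ∑ i : Fin n, v i • e i := pi_eq_sum_univ v
    calc N v = N (∑ i : Fin n, v i • e i) := by rw [← hv]
    _ ≤ ∑ i : Fin n, N (v i • e i) := sum_le hN _ _
    _ = ∑ i : Fin n, |v i| * N (e i) := by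
        simp [hN.2.1]
    _ ≤ ∑ i : Fin n, ‖v‖ * N (e i) := by
        refine Finset.sum_le_sum fun i _ => ?_
        exact mul_le_mul_of_nonneg_right
          (by simpa [Real.norm_eq_abs] using norm_le_pi_norm v i) (nonneg hN _)
    _ = (∑ i : Fin n, N (e i)) * ‖v‖ := by
        rw [← Finset.mul_sum, mul_comm]
    _ ≤ C * ‖v‖ := by
        have : (0:ℝ) ≤ ‖v‖ := norm_nonneg v
        nlinarith

lemma continuous (hN : IsNorm N) : Continuous N := by
  obtain ⟨C, hCpos, hC⟩ := exists_upper hN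
  rw [Metric.continuous_iff]
  intro v δ hδ
  refine ⟨δ / C, by positivity, fun u hu => ?_⟩
  have h1 : dist (N u) (N v) ≤ C * ‖u - v‖ :=
    le_trans (by rw [Real.dist_eq]; exact abs_sub_le hN u v) (hC _)
  have : dist u v = ‖u - v‖ := dist_eq_norm u v
  calc dist (N u) (N v) ≤ C * ‖u - v‖ := h1
  _ < C * (δ / C) := by
      apply mul_lt_mul_of_pos_left _ hCpos
      rw [← this]; exact hu
  _ = δ := by field_simp

lemma pos_of_ne (hN : IsNorm N) {v} (hv : v ≠ 0) : 0 < N v :=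
  lt_of_le_of_ne (nonneg hN v) (fun h => hv ((hN.1 v).1 h.symm))

lemma exists_lower (hN : IsNorm N) : ∃ ε > 0, ∀ v, ε * ‖v‖ ≤ N v := by
  rcases isEmpty_or_nonempty (Fin n) with hi | hi
  · refine ⟨1, one_pos, fun v => ?_⟩
    have : v = 0 := Subsingleton.elim v 0
    simp [this, map_zero hN]
  · have hsph : IsCompact (Metric.sphere (0 : Fin n → ℝ) 1) := isCompact_sphere 0 1
    have hne : (Metric.sphere (0 : Fin n → ℝ) 1).Nonempty :=
      NormedSpace.sphere_nonempty.2 zero_le_one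
    obtain ⟨v₀, hv₀mem, hv₀min⟩ :=
      hsph.exists_isMinOn hne ((continuous hN).continuousOn)
    have hv₀ : ‖v₀‖ = 1 := by simpa using hv₀mem
    have hv₀ne : v₀ ≠ 0 := by
      intro h; rw [h] at hv₀; simp at hv₀
    refine ⟨N v₀, pos_of_ne hN hv₀ne, fun v => ?_⟩
    rcases eq_or_ne v 0 with rfl | hv
    · simp [map_zero hN]
    · have hvn : (0:ℝ) < ‖v‖ := norm_pos_iff.2 hv
      have hmem : ‖v‖⁻¹ • v ∈ Metric.sphere (0 : Fin n → ℝ) 1 := by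
        simp [norm_smul, abs_of_pos (inv_pos.2 hvn), inv_mul_cancel₀ hvn.ne']
      have h2 : N v₀ ≤ N (‖v‖⁻¹ • v) := hv₀min hmem
      have hsc : N (‖v‖⁻¹ • v) = ‖v‖⁻¹ * N v := by
        rw [hN.2.1, abs_of_pos (inv_pos.2 hvn)]
      rw [hsc] at h2
      calc N v₀ * ‖v‖ ≤ (‖v‖⁻¹ * N v) * ‖v‖ :=
        mul_le_mul_of_nonneg_right h2 hvn.le
      _ = N v := by field_simp

end IsNormAux
namespace OpAux

open IsNormAux

variable {n : ℕ} {N : (Fin n → ℝ) → ℝ}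

/-- entrywise l1 norm of a matrix -/
noncomputable def Q {n : ℕ} (A : Matrix (Fin n) (Fin n) ℝ) : ℝ := ∑ i, ∑ j, |A i j|

lemma Q_nonneg (A : Matrix (Fin n) (Fin n) ℝ) : 0 ≤ Q A := by
  unfold Q; positivity

lemma norm_mulVec_le (A : Matrix (Fin n) (Fin n) ℝ) (v : Fin n → ℝ) :
    ‖A.mulVec v‖ ≤ Q A * ‖v‖ := by
  have h0 : (0:ℝ) ≤ Q A * ‖v‖ := mul_nonneg (Q_nonneg A) (norm_nonneg v)
  rw [pi_norm_le_iff_of_nonneg h0]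
  intro i
  calc ‖A.mulVec v i‖ = |∑ j, A i j * v j| := rfl
  _ ≤ ∑ j, |A i j * v j| := Finset.abs_sum_le_sum_abs _ _
  _ ≤ ∑ j, |A i j| * ‖v‖ := by
      refine Finset.sum_le_sum fun j _ => ?_
      rw [abs_mul]
      exact mul_le_mul_of_nonneg_left
        (by simpa [Real.norm_eq_abs] using norm_le_pi_norm v j) (abs_nonneg _)
  _ = (∑ j, |A i j|) * ‖v‖ := by rw [Finset.sum_mul]
  _ ≤ Q A * ‖v‖ := by
      refine mul_le_mul_of_nonneg_right ?_ (norm_nonneg v)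
      exact Finset.single_le_sum (f := fun i => ∑ j, |A i j|)
        (fun i _ => Finset.sum_nonneg fun j _ => abs_nonneg _) (Finset.mem_univ i)

lemma set_nonempty (hN : IsNorm N) (A : Matrix (Fin n) (Fin n) ℝ) :
    ((fun v => N (A.mulVec v)) '' {v | N v ≤ 1}).Nonempty :=
  ⟨N (A.mulVec 0), 0, by simp [map_zero hN], rfl⟩

lemma set_bddAbove (hN : IsNorm N) {C ε : ℝ} (hCpos : 0 < C) (hε : 0 < ε)
    (hC : ∀ v, N v ≤ C * ‖v‖) (hl : ∀ v, ε * ‖v‖ ≤ N v) (A : Matrix (Fin n) (Fin n) ℝ) :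
    BddAbove ((fun v => N (A.mulVec v)) '' {v | N v ≤ 1}) := by
  refine ⟨C * Q A * ε⁻¹, ?_⟩
  rintro y ⟨v, hv, rfl⟩
  have h1 : ‖v‖ ≤ ε⁻¹ := by
    rw [← one_mul ε⁻¹, ← div_eq_mul_inv, le_div_iff₀ hε, mul_comm]
    exact le_trans (hl v) hv
  calc N (A.mulVec v) ≤ C * ‖A.mulVec v‖ := hC _
  _ ≤ C * (Q A * ‖v‖) := mul_le_mul_of_nonneg_left (norm_mulVec_le A v) hCpos.le
  _ ≤ C * Q A * ε⁻¹ := by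
      rw [mul_assoc]
      exact mul_le_mul_of_nonneg_left
        (mul_le_mul_of_nonneg_left h1 (Q_nonneg A)) hCpos.le

end OpAux
namespace OpAux
open IsNormAux

variable {n : ℕ} {N : (Fin n → ℝ) → ℝ} {C ε : ℝ}

lemma opNorm_nonneg (hN : IsNorm N) (hCpos : 0 < C) (hε : 0 < ε)
    (hC : ∀ v, N v ≤ C * ‖v‖) (hl : ∀ v, ε * ‖v‖ ≤ N v) (A : Matrix (Fin n) (Fin n) ℝ) :
    0 ≤ opNorm N A := by
  have h0 : (0:ℝ) ∈ (fun v => N (A.mulVec v)) '' {v | N v ≤ 1} :=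
    ⟨0, by simp [map_zero hN], by simp [Matrix.mulVec_zero, map_zero hN]⟩
  exact le_csSup (set_bddAbove hN hCpos hε hC hl A) h0

lemma opNorm_le (hN : IsNorm N) {a : ℝ} {A : Matrix (Fin n) (Fin n) ℝ}
    (h : ∀ v, N v ≤ 1 → N (A.mulVec v) ≤ a) : opNorm N A ≤ a := by
  refine csSup_le (set_nonempty hN A) ?_
  rintro y ⟨v, hv, rfl⟩
  exact h v hv

lemma N_mulVec_le (hN : IsNorm N) (hCpos : 0 < C) (hε : 0 < ε)
    (hC : ∀ v, N v ≤ C * ‖v‖) (hl : ∀ v, ε * ‖v‖ ≤ N v)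
    (A : Matrix (Fin n) (Fin n) ℝ) (v : Fin n → ℝ) :
    N (A.mulVec v) ≤ opNorm N A * N v := by
  rcases eq_or_ne v 0 with rfl | hv
  · simp [Matrix.mulVec_zero, map_zero hN]
  · have hNv : 0 < N v := pos_of_ne hN hv
    have hmem : N ((N v)⁻¹ • v) ≤ 1 := by
      rw [hN.2.1, abs_of_pos (inv_pos.2 hNv), inv_mul_cancel₀ hNv.ne']
    have hle : N (A.mulVec ((N v)⁻¹ • v)) ≤ opNorm N A :=
      le_csSup (set_bddAbove hN hCpos hε hC hl A) ⟨_, hmem, rfl⟩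
    rw [Matrix.mulVec_smul, hN.2.1, abs_of_pos (inv_pos.2 hNv)] at hle
    calc N (A.mulVec v) = (N v) * ((N v)⁻¹ * N (A.mulVec v)) := by field_simp
    _ ≤ (N v) * opNorm N A := mul_le_mul_of_nonneg_left hle hNv.le
    _ = opNorm N A * N v := mul_comm _ _

lemma exists_unit (hN : IsNorm N) (hn : Nonempty (Fin n)) : ∃ v₀ : Fin n → ℝ, N v₀ = 1 := by
  have hone : (fun _ : Fin n => (1:ℝ)) ≠ 0 := by
    intro h0
    have := congrFun h0 (Classical.arbitrary (Fin n))
    simpa using this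
  set w : Fin n → ℝ := fun _ => 1
  have hw : 0 < N w := pos_of_ne hN hone
  exact ⟨(N w)⁻¹ • w, by rw [hN.2.1, abs_of_pos (inv_pos.2 hw), inv_mul_cancel₀ hw.ne']⟩

lemma opNorm_one (hN : IsNorm N) (hn : Nonempty (Fin n)) (hCpos : 0 < C) (hε : 0 < ε)
    (hC : ∀ v, N v ≤ C * ‖v‖) (hl : ∀ v, ε * ‖v‖ ≤ N v) :
    opNorm N (1 : Matrix (Fin n) (Fin n) ℝ) = 1 := by
  obtain ⟨v₀, hv₀⟩ := exists_unit hN hn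
  refine le_antisymm (opNorm_le hN fun v hv => by rwa [Matrix.one_mulVec]) ?_
  have h := le_csSup (set_bddAbove hN hCpos hε hC hl 1) ⟨v₀, le_of_eq hv₀, rfl⟩
  simp only [Matrix.one_mulVec] at h
  unfold opNorm
  simp only [Matrix.one_mulVec]
  exact le_trans (le_of_eq hv₀.symm) h

lemma opNorm_Q_le (hN : IsNorm N) (hCpos : 0 < C) (hε : 0 < ε)
    (hC : ∀ v, N v ≤ C * ‖v‖) (hl : ∀ v, ε * ‖v‖ ≤ N v) (A : Matrix (Fin n) (Fin n) ℝ) :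
    opNorm N A ≤ C * Q A * ε⁻¹ := by
  refine opNorm_le hN fun v hv => ?_
  have h1 : ‖v‖ ≤ ε⁻¹ := by
    rw [← one_mul ε⁻¹, ← div_eq_mul_inv, le_div_iff₀ hε, mul_comm]
    exact le_trans (hl v) hv
  calc N (A.mulVec v) ≤ C * ‖A.mulVec v‖ := hC _
  _ ≤ C * (Q A * ‖v‖) := mul_le_mul_of_nonneg_left (norm_mulVec_le A v) hCpos.le
  _ ≤ C * Q A * ε⁻¹ := by
      rw [mul_assoc]
      exact mul_le_mul_of_nonneg_left
        (mul_le_mul_of_nonneg_left h1 (Q_nonneg A)) hCpos.le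

lemma opNorm_add_le (hN : IsNorm N) (hCpos : 0 < C) (hε : 0 < ε)
    (hC : ∀ v, N v ≤ C * ‖v‖) (hl : ∀ v, ε * ‖v‖ ≤ N v) (A B : Matrix (Fin n) (Fin n) ℝ) :
    opNorm N (A + B) ≤ opNorm N A + opNorm N B := by
  refine opNorm_le hN fun v hv => ?_
  rw [Matrix.add_mulVec]
  refine le_trans (hN.2.2 _ _) ?_
  have h1 := N_mulVec_le hN hCpos hε hC hl A v
  have h2 := N_mulVec_le hN hCpos hε hC hl B v
  have hA := opNorm_nonneg hN hCpos hε hC hl A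
  have hB := opNorm_nonneg hN hCpos hε hC hl B
  nlinarith [nonneg hN v]

lemma abs_opNorm_sub_le (hN : IsNorm N) (hCpos : 0 < C) (hε : 0 < ε)
    (hC : ∀ v, N v ≤ C * ‖v‖) (hl : ∀ v, ε * ‖v‖ ≤ N v) (A B : Matrix (Fin n) (Fin n) ℝ) :
    |opNorm N A - opNorm N B| ≤ C * Q (A - B) * ε⁻¹ := by
  have key : ∀ A B : Matrix (Fin n) (Fin n) ℝ,
      opNorm N A - opNorm N B ≤ C * Q (A - B) * ε⁻¹ := by
    intro A B
    have h1 : opNorm N A ≤ opNorm N B + opNorm N (A - B) := by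
      have := opNorm_add_le hN hCpos hε hC hl B (A - B)
      simpa using this
    have h2 := opNorm_Q_le hN hCpos hε hC hl (A - B)
    linarith
  have hQ : Q (B - A) = Q (A - B) := by
    unfold Q
    congr 1; ext i; congr 1; ext j
    rw [Matrix.sub_apply, Matrix.sub_apply, abs_sub_comm]
  rw [abs_sub_le_iff]
  exact ⟨key A B, hQ ▸ key B A⟩

end OpAux
namespace RatioAux
open IsNormAux OpAux

variable {n : ℕ} {N : (Fin n → ℝ) → ℝ} {C ε : ℝ}

noncomputable def ratio (N : (Fin n → ℝ) → ℝ) (A : Matrix (Fin n) (Fin n) ℝ) (h : ℝ) : ℝ :=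
  (opNorm N (1 + h • A) - 1) / h

lemma one_add_smul_mulVec (A : Matrix (Fin n) (Fin n) ℝ) (h : ℝ) (v : Fin n → ℝ) :
    (1 + h • A).mulVec v = v + h • A.mulVec v := by
  rw [Matrix.add_mulVec, Matrix.one_mulVec, Matrix.smul_mulVec]

lemma ratio_mono (hN : IsNorm N) (hCpos : 0 < C) (hε : 0 < ε)
    (hC : ∀ v, N v ≤ C * ‖v‖) (hl : ∀ v, ε * ‖v‖ ≤ N v)
    (A : Matrix (Fin n) (Fin n) ℝ) : MonotoneOn (ratio N A) (Ioi 0) := by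
  rintro h₁ (h₁pos : (0:ℝ) < h₁) h₂ (h₂pos : (0:ℝ) < h₂) h12
  have key : opNorm N (1 + h₁ • A) ≤ (1 - h₁/h₂) + (h₁/h₂) * opNorm N (1 + h₂ • A) := by
    refine opNorm_le hN fun v hv => ?_
    have hvn := nonneg hN v
    have hsplit : (1 + h₁ • A).mulVec v
        = (1 - h₁/h₂) • v + (h₁/h₂) • ((1 + h₂ • A).mulVec v) := by
      rw [one_add_smul_mulVec, one_add_smul_mulVec, smul_add, sub_smul, one_smul, smul_smul]
      rw [div_mul_cancel₀ _ h₂pos.ne']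
      abel
    rw [hsplit]
    have hθ0 : 0 ≤ h₁/h₂ := by positivity
    have hθ1 : h₁/h₂ ≤ 1 := (div_le_one h₂pos).2 h12
    have t1 : N ((1 - h₁/h₂) • v) = (1 - h₁/h₂) * N v := by
      rw [hN.2.1, abs_of_nonneg (by linarith)]
    have t2 : N ((h₁/h₂) • ((1 + h₂ • A).mulVec v)) = (h₁/h₂) * N ((1 + h₂ • A).mulVec v) := by
      rw [hN.2.1, abs_of_nonneg hθ0]
    have t3 : N ((1 + h₂ • A).mulVec v) ≤ opNorm N (1 + h₂ • A) :=
      le_trans (N_mulVec_le hN hCpos hε hC hl _ v)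
        (by nlinarith [opNorm_nonneg hN hCpos hε hC hl (1 + h₂ • A)])
    refine le_trans (hN.2.2 _ _) ?_
    rw [t1, t2]
    nlinarith
  unfold ratio
  rw [div_le_div_iff₀ h₁pos h₂pos]
  have h2 : 0 < h₂ := h₂pos
  have hk : opNorm N (1 + h₁ • A) * h₂ ≤ h₂ - h₁ + h₁ * opNorm N (1 + h₂ • A) := by
    have := mul_le_mul_of_nonneg_right key h₂pos.le
    calc opNorm N (1 + h₁ • A) * h₂
        ≤ ((1 - h₁/h₂) + (h₁/h₂) * opNorm N (1 + h₂ • A)) * h₂ := this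
    _ = h₂ - h₁ + h₁ * opNorm N (1 + h₂ • A) := by field_simp
  nlinarith

lemma ratio_lower (hN : IsNorm N) (hn : Nonempty (Fin n)) (hCpos : 0 < C) (hε : 0 < ε)
    (hC : ∀ v, N v ≤ C * ‖v‖) (hl : ∀ v, ε * ‖v‖ ≤ N v)
    (A : Matrix (Fin n) (Fin n) ℝ) {h : ℝ} (hpos : 0 < h) :
    -opNorm N A ≤ ratio N A h := by
  obtain ⟨v₀, hv₀⟩ := exists_unit hN hn
  have hid : v₀ = (1 + h • A).mulVec v₀ + (-(h • A.mulVec v₀)) := by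
    rw [one_add_smul_mulVec]; abel
  have h1 : N v₀ ≤ N ((1 + h • A).mulVec v₀) + N (h • A.mulVec v₀) := by
    calc N v₀ = N ((1 + h • A).mulVec v₀ + (-(h • A.mulVec v₀))) := by rw [← hid]
    _ ≤ N ((1 + h • A).mulVec v₀) + N (-(h • A.mulVec v₀)) := hN.2.2 _ _
    _ = N ((1 + h • A).mulVec v₀) + N (h • A.mulVec v₀) := by rw [map_neg hN]
  have h2 : N ((1 + h • A).mulVec v₀) ≤ opNorm N (1 + h • A) := by
    refine le_trans (N_mulVec_le hN hCpos hε hC hl _ v₀) ?_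
    rw [hv₀, mul_one]
  have h3 : N (h • A.mulVec v₀) ≤ h * opNorm N A := by
    rw [hN.2.1, abs_of_pos hpos]
    refine mul_le_mul_of_nonneg_left ?_ hpos.le
    refine le_trans (N_mulVec_le hN hCpos hε hC hl A v₀) ?_
    rw [hv₀, mul_one]
  have : 1 - h * opNorm N A ≤ opNorm N (1 + h • A) := by
    rw [hv₀] at h1; linarith
  unfold ratio
  rw [le_div_iff₀ hpos]
  linarith

lemma tendsto_ratio (hN : IsNorm N) (hn : Nonempty (Fin n)) (hCpos : 0 < C) (hε : 0 < ε)
    (hC : ∀ v, N v ≤ C * ‖v‖) (hl : ∀ v, ε * ‖v‖ ≤ N v)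
    (A : Matrix (Fin n) (Fin n) ℝ) :
    Tendsto (ratio N A) (𝓝[>] (0:ℝ)) (𝓝 (sInf (ratio N A '' Ioi 0))) := by
  refine MonotoneOn.tendsto_nhdsGT (ratio_mono hN hCpos hε hC hl A) ?_
  refine ⟨-opNorm N A, ?_⟩
  rintro y ⟨h, hh, rfl⟩
  exact ratio_lower hN hn hCpos hε hC hl A hh

lemma matMeasure_eq (hN : IsNorm N) (hn : Nonempty (Fin n)) (hCpos : 0 < C) (hε : 0 < ε)
    (hC : ∀ v, N v ≤ C * ‖v‖) (hl : ∀ v, ε * ‖v‖ ≤ N v)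
    (A : Matrix (Fin n) (Fin n) ℝ) :
    matMeasure N A = sInf (ratio N A '' Ioi 0) :=
  Tendsto.limUnder_eq (tendsto_ratio hN hn hCpos hε hC hl A)

lemma exists_ratio_lt (hN : IsNorm N) (hn : Nonempty (Fin n)) (hCpos : 0 < C) (hε : 0 < ε)
    (hC : ∀ v, N v ≤ C * ‖v‖) (hl : ∀ v, ε * ‖v‖ ≤ N v)
    (A : Matrix (Fin n) (Fin n) ℝ) {c δ : ℝ} (hA : matMeasure N A ≤ c) (hδ : 0 < δ) :
    ∃ h > 0, ratio N A h < c + δ := by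
  have ht := tendsto_ratio hN hn hCpos hε hC hl A
  rw [← matMeasure_eq hN hn hCpos hε hC hl A] at ht
  have : ∀ᶠ h in 𝓝[>] (0:ℝ), ratio N A h < c + δ :=
    ht (Iio_mem_nhds (by linarith))
  obtain ⟨h, hlt, hpos⟩ := (this.and eventually_mem_nhdsWithin).exists
  exact ⟨h, hpos, hlt⟩

end RatioAux
namespace JacAux
open IsNormAux OpAux RatioAux

variable {n : ℕ} {N : (Fin n → ℝ) → ℝ} {C ε : ℝ} {f : (Fin n → ℝ) → (Fin n → ℝ)}

lemma jac_mulVec (f : (Fin n → ℝ) → (Fin n → ℝ)) (z w : Fin n → ℝ) :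
    (jac f z).mulVec w = fderiv ℝ f z w := by
  have : Matrix.toLin' (LinearMap.toMatrix' (fderiv ℝ f z).toLinearMap)
      = (fderiv ℝ f z).toLinearMap := Matrix.toLin'_toMatrix' _
  calc (jac f z).mulVec w
      = Matrix.toLin' (LinearMap.toMatrix' (fderiv ℝ f z).toLinearMap) w := by
        rw [Matrix.toLin'_apply]; rfl
  _ = (fderiv ℝ f z).toLinearMap w := by rw [this]
  _ = fderiv ℝ f z w := rfl

lemma jac_entry_continuous (hf : ContDiff ℝ 1 f) (i j : Fin n) :
    Continuous fun z => jac f z i j := by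
  have h1 : Continuous fun z => fderiv ℝ f z := hf.continuous_fderiv one_ne_zero
  have h2 : Continuous fun z => (fderiv ℝ f z) (fun j' => if j' = j then (1:ℝ) else 0) :=
    h1.clm_apply continuous_const
  have h3 : Continuous fun z => (fderiv ℝ f z) (fun j' => if j' = j then (1:ℝ) else 0) i :=
    (continuous_apply i).comp h2
  convert h3 using 1
  ext z
  rw [jac, LinearMap.toMatrix'_apply]
  show (fderiv ℝ f z) (Pi.single j 1) i = _
  rw [show (Pi.single j 1 : Fin n → ℝ) = fun j' => if j' = j then (1:ℝ) else 0 from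
    funext fun j' => Pi.single_apply j 1 j']

lemma continuous_opNorm_one_add (hN : IsNorm N) (hCpos : 0 < C) (hε : 0 < ε)
    (hC : ∀ v, N v ≤ C * ‖v‖) (hl : ∀ v, ε * ‖v‖ ≤ N v)
    (hf : ContDiff ℝ 1 f) (h : ℝ) :
    Continuous fun z => opNorm N (1 + h • jac f z) := by
  rw [continuous_iff_continuousAt]
  intro z₀
  rw [ContinuousAt, tendsto_iff_dist_tendsto_zero]
  set g : (Fin n → ℝ) → ℝ :=
    fun z => C * (∑ i, ∑ j, |(1 + h • jac f z - (1 + h • jac f z₀)) i j|) * ε⁻¹ with hg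
  refine squeeze_zero (g := g) (fun z => dist_nonneg) (fun z => ?_) ?_
  · rw [Real.dist_eq, hg]
    exact abs_opNorm_sub_le hN hCpos hε hC hl _ _
  · have hgc : Continuous g := by
      refine (continuous_const.mul ?_).mul continuous_const
      refine continuous_finset_sum _ fun i _ => continuous_finset_sum _ fun j _ => ?_
      have : Continuous fun z => (1 + h • jac f z - (1 + h • jac f z₀)) i j := by
        have : (fun z => (1 + h • jac f z - (1 + h • jac f z₀)) i j)
            = fun z => h * jac f z i j - h * jac f z₀ i j := by
          funext z
          simp [Matrix.sub_apply, Matrix.add_apply, Matrix.smul_apply, smul_eq_mul]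
        rw [this]
        exact (continuous_const.mul (jac_entry_continuous hf i j)).sub continuous_const
      exact this.abs
    have hg0 : g z₀ = 0 := by
      rw [hg]; simp
    have := hgc.tendsto z₀
    rwa [hg0] at this

end JacAux
namespace MVTAux
open IsNormAux

variable {n : ℕ} {N : (Fin n → ℝ) → ℝ}

lemma n_mvt (hN : IsNorm N) {G : (Fin n → ℝ) → (Fin n → ℝ)} (hG : Differentiable ℝ G)
    (a b : Fin n → ℝ) {K : ℝ}
    (hb : ∀ s ∈ Icc (0:ℝ) 1, N ((fderiv ℝ G (a + s • (b - a))) (b - a)) ≤ K) :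
    N (G b - G a) ≤ K := by
  set γ : ℝ → (Fin n → ℝ) := fun s => a + s • (b - a) with hγ
  set ψ : ℝ → (Fin n → ℝ) := fun s => G (γ s) with hψ
  set θ : ℝ → ℝ := fun s => N (ψ s - ψ 0) with hθ
  have hγc : Continuous γ := by
    exact continuous_const.add (continuous_id.smul continuous_const)
  have hψc : Continuous ψ := hG.continuous.comp hγc
  have hψd : ∀ s : ℝ, HasDerivAt ψ ((fderiv ℝ G (γ s)) (b - a)) s := by
    intro s
    have h1 : HasDerivAt γ (b - a) s := by
      have : HasDerivAt (fun s : ℝ => s • (b - a)) ((1:ℝ) • (b - a)) s :=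
        (hasDerivAt_id s).smul_const (b - a)
      simpa only [one_smul] using this.const_add a
    exact ((hG (γ s)).hasFDerivAt.comp_hasDerivAt s h1)
  have key : ∀ r > 0, θ 1 ≤ (K + r) * 1 := by
    intro r hr
    have := image_le_of_liminf_slope_right_lt_deriv_boundary'
      (f := θ) (f' := fun s => N ((fderiv ℝ G (γ s)) (b - a))) (a := 0) (b := 1)
      ((continuous hN).comp (hψc.sub continuous_const) |>.continuousOn)
      ?_ (B := fun s => (K + r) * s) (B' := fun _ => K + r) ?_ ?_ ?_ ?_
    · exact this (right_mem_Icc.2 zero_le_one)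
    · -- slope condition
      intro s hs r' hr'
      have hts : Tendsto (fun z => N (slope ψ s z)) (𝓝[>] s) (𝓝 (N ((fderiv ℝ G (γ s)) (b - a)))) := by
        have h1 : Tendsto (slope ψ s) (𝓝[≠] s) (𝓝 ((fderiv ℝ G (γ s)) (b - a))) :=
          hasDerivAt_iff_tendsto_slope.1 (hψd s)
        have h2 : Tendsto (slope ψ s) (𝓝[>] s) (𝓝 ((fderiv ℝ G (γ s)) (b - a))) :=
          h1.mono_left (nhdsWithin_mono s fun z hz => ne_of_gt hz)
        exact ((continuous hN).tendsto _).comp h2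
      have hev : ∀ᶠ z in 𝓝[>] s, N (slope ψ s z) < r' := hts (Iio_mem_nhds hr')
      have hev2 : ∀ᶠ z in 𝓝[>] s, slope θ s z ≤ N (slope ψ s z) := by
        filter_upwards [self_mem_nhdsWithin] with z hz
        have hzs : (0:ℝ) < z - s := sub_pos.2 hz
        have h3 : θ z - θ s ≤ N (ψ z - ψ s) := by
          have := abs_sub_le hN (ψ z - ψ 0) (ψ s - ψ 0)
          have he : (ψ z - ψ 0) - (ψ s - ψ 0) = ψ z - ψ s := by abel
          rw [he] at this
          calc θ z - θ s ≤ |θ z - θ s| := le_abs_self _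
          _ ≤ N (ψ z - ψ s) := this
        have h4 : N (slope ψ s z) = N (ψ z - ψ s) / (z - s) := by
          rw [slope_def_module, hN.2.1, abs_of_pos (inv_pos.2 hzs)]
          rw [div_eq_inv_mul]
        rw [slope_def_field, h4]
        gcongr
      exact ((hev2.and hev).mono fun z hz => lt_of_le_of_lt hz.1 hz.2).frequently
    · -- θ 0 ≤ B 0
      simp [hθ, map_zero hN]
    · exact (continuous_const.mul continuous_id).continuousOn
    · intro s _
      have : HasDerivWithinAt (fun y : ℝ => (K + r) * y) ((K + r) * 1) (Ici s) s :=
        ((hasDerivAt_id s).const_mul (K + r)).hasDerivWithinAt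
      simpa using this
    · intro s hs _
      refine lt_of_le_of_lt (hb s (Ico_subset_Icc_self hs)) ?_
      show K < K + r
      linarith
  have hfin : θ 1 ≤ K := by
    have h2 : ∀ r > 0, θ 1 ≤ K + r := fun r hr => by
      have := key r hr; rwa [mul_one] at this
    exact le_of_forall_pos_le_add fun r hr => h2 r hr
  have he : θ 1 = N (G b - G a) := by
    have h0 : γ 0 = a := by simp [hγ]
    have h1 : γ 1 = b := by simp [hγ]
    show N (G (γ 1) - G (γ 0)) = N (G b - G a)
    rw [h0, h1]
  rwa [he] at hfin

end MVTAux
namespace MainAux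
open IsNormAux OpAux RatioAux JacAux MVTAux

variable {n : ℕ} {N : (Fin n → ℝ) → ℝ} {C ε : ℝ} {f : (Fin n → ℝ) → (Fin n → ℝ)}

/-- Uniform bound on opNorm (1 + h • jac f z) over a compact segment, for all small h. -/
lemma segment_bound (hN : IsNorm N) (hn : Nonempty (Fin n)) (hCpos : 0 < C) (hε : 0 < ε)
    (hC : ∀ v, N v ≤ C * ‖v‖) (hl : ∀ v, ε * ‖v‖ ≤ N v)
    (hf : ContDiff ℝ 1 f) {c δ : ℝ} (hμ : ∀ z, matMeasure N (jac f z) ≤ -c) (hδ : 0 < δ)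
    (a b : Fin n → ℝ) :
    ∃ h₀ > 0, ∀ h, 0 < h → h ≤ h₀ → ∀ s ∈ Icc (0:ℝ) 1,
      opNorm N (1 + h • jac f (a + s • (b - a))) ≤ 1 + h * (-c + δ) := by
  have hz : ∀ z : Fin n → ℝ, ∃ h > 0, ratio N (jac f z) h < -c + δ :=
    fun z => exists_ratio_lt hN hn hCpos hε hC hl _ (hμ z) hδ
  choose H Hpos Hlt using hz
  set γ : ℝ → (Fin n → ℝ) := fun s => a + s • (b - a) with hγ
  have hγc : Continuous γ := continuous_const.add (continuous_id.smul continuous_const)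
  set K : Set (Fin n → ℝ) := γ '' Icc (0:ℝ) 1 with hK
  have hKcomp : IsCompact K := isCompact_Icc.image hγc
  set U : (Fin n → ℝ) → Set (Fin n → ℝ) :=
    fun z => {w | ratio N (jac f w) (H z) < -c + δ} with hU
  have hUnhds : ∀ z ∈ K, U z ∈ 𝓝 z := by
    intro z _
    have hcont : Continuous fun w => ratio N (jac f w) (H z) := by
      unfold ratio
      exact ((continuous_opNorm_one_add hN hCpos hε hC hl hf (H z)).sub
        continuous_const).div_const _
    exact (isOpen_lt hcont continuous_const).mem_nhds (Hlt z)
  obtain ⟨T, hTK, hTcov⟩ := hKcomp.elim_nhds_subcover U hUnhds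
  have hKne : γ 0 ∈ K := mem_image_of_mem γ (left_mem_Icc.2 zero_le_one)
  have hTne : T.Nonempty := by
    rcases Finset.eq_empty_or_nonempty T with rfl | h
    · exfalso
      have := hTcov hKne
      simpa using this
    · exact h
  refine ⟨T.inf' hTne H, (Finset.lt_inf'_iff hTne).2 fun i _ => Hpos i, ?_⟩
  intro h hpos hle s hs
  have hzK : γ s ∈ K := mem_image_of_mem γ hs
  obtain ⟨i, hiT, hiU⟩ : ∃ i ∈ T, γ s ∈ U i := by
    have := hTcov hzK
    simpa using this
  have h1 : ratio N (jac f (γ s)) h ≤ ratio N (jac f (γ s)) (H i) := by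
    refine ratio_mono hN hCpos hε hC hl _ hpos (Hpos i) ?_
    exact le_trans hle (Finset.inf'_le H hiT)
  have h2 : ratio N (jac f (γ s)) h < -c + δ := lt_of_le_of_lt h1 hiU
  unfold ratio at h2
  rw [div_lt_iff₀ hpos] at h2
  have : (-c + δ) * h = h * (-c + δ) := mul_comm _ _
  linarith

end MainAux
namespace MainAux
open IsNormAux OpAux RatioAux JacAux MVTAux

variable {n : ℕ} {N : (Fin n → ℝ) → ℝ} {C ε : ℝ} {f : (Fin n → ℝ) → (Fin n → ℝ)}
variable {x ξ : ℝ → (Fin n → ℝ)}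

/-- Dini-slope bound for g t = N (x t - ξ t). -/
lemma slope_bound (hN : IsNorm N) (hn : Nonempty (Fin n)) (hCpos : 0 < C) (hε : 0 < ε)
    (hC : ∀ v, N v ≤ C * ‖v‖) (hl : ∀ v, ε * ‖v‖ ≤ N v)
    (hf : ContDiff ℝ 1 f) {c : ℝ} (hμ : ∀ z, matMeasure N (jac f z) ≤ -c)
    (hx : ∀ t ∈ Ici (0:ℝ), HasDerivWithinAt x (f (x t)) (Ici 0) t)
    (hξ : ∀ t ∈ Ici (0:ℝ), HasDerivWithinAt ξ (f (ξ t)) (Ici 0) t)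
    {t : ℝ} (ht : t ∈ Ici (0:ℝ)) {δ : ℝ} (hδ : 0 < δ) {r : ℝ}
    (hr : (-c + δ) * N (x t - ξ t) < r) :
    ∃ᶠ z in 𝓝[>] t, slope (fun s => N (x s - ξ s)) t z < r := by
  set v : ℝ → (Fin n → ℝ) := fun s => x s - ξ s with hv
  set g : ℝ → ℝ := fun s => N (v s) with hg
  set w : Fin n → ℝ := f (x t) - f (ξ t) with hw
  obtain ⟨h₀, h₀pos, hbound⟩ := segment_bound hN hn hCpos hε hC hl hf hμ hδ (ξ t) (x t)
  -- derivative of v from the right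
  have hvd : HasDerivWithinAt v w (Ici t) t :=
    ((hx t ht).sub (hξ t ht)).mono (fun z (hz : t ≤ z) => show (0:ℝ) ≤ z from le_trans ht hz)
  have hslope0 : Tendsto (fun z => N (slope v t z - w)) (𝓝[>] t) (𝓝 0) := by
    have h1 : Tendsto (slope v t) (𝓝[Ici t \ {t}] t) (𝓝 w) :=
      hasDerivWithinAt_iff_tendsto_slope.1 hvd
    rw [Ici_sdiff_left] at h1
    have h2 : Tendsto (fun z => slope v t z - w) (𝓝[>] t) (𝓝 0) := by
      simpa using h1.sub_const w
    have := ((continuous hN).tendsto 0).comp h2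
    rwa [map_zero hN] at this
  have hev1 : ∀ᶠ z in 𝓝[>] t, N (slope v t z - w) < r - (-c + δ) * g t :=
    hslope0 (Iio_mem_nhds (by simpa [hg, hv] using sub_pos.2 hr))
  have hev2 : Ioc t (t + h₀) ∈ 𝓝[>] t :=
    Ioc_mem_nhdsGT_of_mem ⟨le_rfl, by linarith⟩
  refine ((hev1.and (eventually_of_mem hev2 fun z hz => hz)).mono ?_).frequently
  rintro z ⟨h1, hz⟩
  set h : ℝ := z - t with hh
  have hpos : 0 < h := sub_pos.2 hz.1
  have hle : h ≤ h₀ := by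
    have := hz.2; simp only [hh]; linarith
  -- MVT applied to G = id + h • f
  set G : (Fin n → ℝ) → (Fin n → ℝ) := fun u => u + h • f u with hG
  have hGdiff : Differentiable ℝ G :=
    differentiable_id.add ((hf.differentiable one_ne_zero).const_smul h)
  have hGd : ∀ u, fderiv ℝ G u
      = ContinuousLinearMap.id ℝ _ + h • fderiv ℝ f u := by
    intro u
    have : HasFDerivAt G (ContinuousLinearMap.id ℝ _ + h • fderiv ℝ f u) u :=
      (hasFDerivAt_id u).add (((hf.differentiable one_ne_zero) u).hasFDerivAt.const_smul h)
    exact this.fderiv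
  have hmvt : N (G (x t) - G (ξ t)) ≤ (1 + h * (-c + δ)) * g t := by
    refine n_mvt hN hGdiff (ξ t) (x t) ?_
    intro s hs
    have happ : (fderiv ℝ G (ξ t + s • (x t - ξ t))) (x t - ξ t)
        = (1 + h • jac f (ξ t + s • (x t - ξ t))).mulVec (x t - ξ t) := by
      rw [hGd, one_add_smul_mulVec, jac_mulVec]
      rfl
    rw [happ]
    refine le_trans (N_mulVec_le hN hCpos hε hC hl _ _) ?_
    exact mul_le_mul_of_nonneg_right (hbound h hpos hle s hs) (nonneg hN _)
  have hGdiffeq : G (x t) - G (ξ t) = v t + h • w := by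
    simp only [hG, hw, hv]
    rw [smul_sub]
    abel
  -- main estimate
  have key : g z - g t ≤ h * (-c + δ) * g t + h * N (slope v t z - w) := by
    have e1 : v z - (v t + h • w) = h • (slope v t z - w) := by
      have hne : z - t ≠ 0 := (sub_pos.2 hz.1).ne'
      rw [slope_def_module, hh]
      match_scalars <;> field_simp
    have h2 : g z ≤ N (v t + h • w) + N (v z - (v t + h • w)) := by
      have := hN.2.2 (v t + h • w) (v z - (v t + h • w))
      simpa using this
    have h3 : N (v z - (v t + h • w)) = h * N (slope v t z - w) := by
      rw [e1, hN.2.1, abs_of_pos hpos]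
    have h4 : N (v t + h • w) ≤ (1 + h * (-c + δ)) * g t := by
      rw [← hGdiffeq]; exact hmvt
    have := h2
    rw [h3] at this
    nlinarith [nonneg hN (v t)]
  rw [slope_def_field, div_lt_iff₀ (sub_pos.2 hz.1)]
  show g z - g t < r * (z - t)
  calc g z - g t ≤ h * (-c + δ) * g t + h * N (slope v t z - w) := key
  _ < h * (-c + δ) * g t + h * (r - (-c + δ) * g t) := by
      have := mul_lt_mul_of_pos_left h1 hpos
      linarith
  _ = r * (z - t) := by rw [hh]; ring

end MainAux

/-- Contraction: any two solutions converge exponentially: `|x(t)−ξ(t)| ≤ |x(0)−ξ(0)|e^{-ct}`. -/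
theorem stmt_9 {n : ℕ} (N : (Fin n → ℝ) → ℝ) (hN : IsNorm N)
    (f : (Fin n → ℝ) → (Fin n → ℝ)) (hf : ContDiff ℝ 1 f)
    (c : ℝ) (hc : 0 < c) (hμ : ∀ x, matMeasure N (jac f x) ≤ -c)
    (x ξ : ℝ → (Fin n → ℝ))
    (hx : ∀ t ∈ Ici (0:ℝ), HasDerivWithinAt x (f (x t)) (Ici 0) t)
    (hξ : ∀ t ∈ Ici (0:ℝ), HasDerivWithinAt ξ (f (ξ t)) (Ici 0) t) :
    ∀ t ∈ Ici (0:ℝ), N (x t - ξ t) ≤ N (x 0 - ξ 0) * Real.exp (-c * t) := by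
  rcases Nat.eq_zero_or_pos n with hn0 | hn
  · subst hn0
    intro t _
    have hv : ∀ v : Fin 0 → ℝ, v = 0 := fun v => funext fun i => i.elim0
    rw [hv (x t - ξ t), hv (x 0 - ξ 0), IsNormAux.map_zero hN]
    positivity
  · have hne : Nonempty (Fin n) := Fin.pos_iff_nonempty.1 hn
    obtain ⟨C, hCpos, hC⟩ := IsNormAux.exists_upper hN
    obtain ⟨ε, hεpos, hl⟩ := IsNormAux.exists_lower hN
    intro t ht
    set g : ℝ → ℝ := fun s => N (x s - ξ s) with hg
    have hxc : ContinuousOn x (Ici 0) := fun s hs => (hx s hs).continuousWithinAt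
    have hξc : ContinuousOn ξ (Ici 0) := fun s hs => (hξ s hs).continuousWithinAt
    have hgc : ContinuousOn g (Ici 0) :=
      (IsNormAux.continuous hN).comp_continuousOn (hxc.sub hξc)
    -- Step B: for every e > 0, g t ≤ (g 0 + e) * exp ((-c + e) * t)
    have stepB : ∀ e > 0, g t ≤ (g 0 + e) * Real.exp ((-c + e) * t) := by
      intro e he
      set B : ℝ → ℝ := fun s => (g 0 + e) * Real.exp ((-c + e) * s) with hB
      have hBd : ∀ s : ℝ, HasDerivAt B ((-c + e) * B s) s := by
        intro s
        have h1 : HasDerivAt (fun s : ℝ => (-c + e) * s) (-c + e) s := by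
          simpa using (hasDerivAt_id s).const_mul (-c + e)
        have h2 : HasDerivAt (fun s => Real.exp ((-c + e) * s))
            (Real.exp ((-c + e) * s) * (-c + e)) s := (Real.hasDerivAt_exp _).comp s h1
        have h3 := h2.const_mul (g 0 + e)
        have : (g 0 + e) * (Real.exp ((-c + e) * s) * (-c + e)) = (-c + e) * B s := by
          rw [hB]; ring
        rwa [this] at h3
      have hmain := image_le_of_liminf_slope_right_lt_deriv_boundary'
        (f := g) (f' := fun s => (-c + e/2) * g s) (a := 0) (b := t)
        (hgc.mono (fun s hs => hs.1))
        ?_ (B := B) (B' := fun s => (-c + e) * B s)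
        ?_
        (fun s _ => (hBd s).continuousAt.continuousWithinAt)
        (fun s _ => (hBd s).hasDerivWithinAt)
        ?_
      · exact hmain (right_mem_Icc.2 ht)
      · intro s hs r hr
        exact MainAux.slope_bound hN hne hCpos hεpos hC hl hf hμ hx hξ hs.1 (by linarith) hr
      · rw [hB]
        simp only [mul_zero, Real.exp_zero, mul_one]
        linarith
      · intro s hs hgs
        show (-c + e / 2) * g s < (-c + e) * B s
        rw [hgs]
        have hBpos : 0 < B s := by
          rw [hB]
          have := IsNormAux.nonneg hN (x 0 - ξ 0)
          positivity
        nlinarith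
    -- let e → 0⁺
    have hlim : Tendsto (fun e => (g 0 + e) * Real.exp ((-c + e) * t)) (𝓝[>] (0:ℝ))
        (𝓝 (g 0 * Real.exp (-c * t))) := by
      have hcont : ContinuousAt (fun e : ℝ => (g 0 + e) * Real.exp ((-c + e) * t)) 0 := by
        fun_prop
      have := hcont.tendsto
      simp only [add_zero] at this
      exact this.mono_left nhdsWithin_le_nhds
    refine ge_of_tendsto hlim ?_
    filter_upwards [self_mem_nhdsWithin] with e he
    exact stepB e he
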